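/- Let p0, p1 ∈ ℂ with d := p1 − p0 ≠ 0 and α0, α1 ∈ ℝ. Set β_j := α_j − arg d for j ∈ {0,1}, β := β0·ℓ²_0 + f̃(β0,β1)·ℓ²_{1/2} + β1·ℓ²_1, and assume I(β) ≠ 0; define the angle defect δ := arg I(β) and the curve p(t) := p0 + (d / I(β))·I(β,t) for t ∈ [0,1]. Then p(0) = p0, p(1) = p1, and the tangent angle of p at the endpoints satisfies arg p′(0) = α0 − δ and arg p′(1) = α1 − δ modulo 2π; that is, p is a clothoid interpolating the point data whose boundary tangent angles differ from the prescribed values exactly by the angle defect δ. -/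

import Mathlib

open scoped Real

/-- Quadratic Lagrange polynomial at the break point `0` (nodes `0, 1/2, 1`). -/
noncomputable def lag0 (t : ℝ) : ℝ := (t - 1) * (2 * t - 1)

/-- Quadratic Lagrange polynomial at the break point `1/2` (nodes `0, 1/2, 1`). -/
noncomputable def lagHalf (t : ℝ) : ℝ := 4 * t * (1 - t)

/-- Quadratic Lagrange polynomial at the break point `1` (nodes `0, 1/2, 1`). -/
noncomputable def lag1 (t : ℝ) : ℝ := t * (2 * t - 1)

/-- `I(β,t) := ∫₀ᵗ exp(i·β(s)) ds`. -/
noncomputable def Iint (β : ℝ → ℝ) (t : ℝ) : ℂ :=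
  ∫ s in (0:ℝ)..t, Complex.exp (Complex.I * (β s : ℂ))

/-- The explicit cubic approximation of the exact middle-angle function of clothoid
two-point Hermite interpolation. -/
noncomputable def ftilde (b0 b1 : ℝ) : ℝ :=
  (b0 + b1) * ((b0 ^ 2 + b1 ^ 2) / 68 - b0 * b1 / 46 - 1 / 4)

/-- The approximate clothoid `p(t) = p₀ + (d / I(β))·I(β,t)` built with
the middle angle `f̃(β₀,β₁)` interpolates the point data, and its boundary tangent angles
differ from the prescribed angles `α₀, α₁` exactly by the angle defect `δ = arg I(β)`
(modulo `2π`). -/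
theorem approximate_clothoid_interpolation
    (p0 p1 : ℂ) (hd : p1 - p0 ≠ 0) (α0 α1 : ℝ) (β0 β1 : ℝ)
    (hβ0 : β0 = α0 - (p1 - p0).arg) (hβ1 : β1 = α1 - (p1 - p0).arg)
    (β : ℝ → ℝ) (hβ : ∀ t, β t = β0 * lag0 t + ftilde β0 β1 * lagHalf t + β1 * lag1 t)
    (hI : Iint β 1 ≠ 0)
    (p : ℝ → ℂ) (hp : ∀ t, p t = p0 + ((p1 - p0) / Iint β 1) * Iint β t) :
    p 0 = p0 ∧ p 1 = p1 ∧
    (∀ t : ℝ, HasDerivAt p ((p1 - p0) / Iint β 1 * Complex.exp (Complex.I * (β t : ℂ))) t) ∧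
    (∃ k : ℤ, ((p1 - p0) / Iint β 1 * Complex.exp (Complex.I * (β 0 : ℂ))).arg
        = α0 - (Iint β 1).arg + 2 * π * k) ∧
    (∃ k : ℤ, ((p1 - p0) / Iint β 1 * Complex.exp (Complex.I * (β 1 : ℂ))).arg
        = α1 - (Iint β 1).arg + 2 * π * k) := by
  have hβfun : β = fun t => β0 * lag0 t + ftilde β0 β1 * lagHalf t + β1 * lag1 t := funext hβ
  have hβcont : Continuous β := by
    rw [hβfun]; unfold lag0 lagHalf lag1; continuity
  have hfcont : Continuous fun s : ℝ => Complex.exp (Complex.I * (β s : ℂ)) := by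
    exact Complex.continuous_exp.comp (continuous_const.mul (Complex.continuous_ofReal.comp hβcont))
  have hI0 : Iint β 0 = 0 := by simp [Iint]
  have hderiv : ∀ t : ℝ, HasDerivAt p
      ((p1 - p0) / Iint β 1 * Complex.exp (Complex.I * (β t : ℂ))) t := by
    intro t
    have h1 : HasDerivAt (fun u => Iint β u) (Complex.exp (Complex.I * (β t : ℂ))) t := by
      exact intervalIntegral.integral_hasDerivAt_right
        (hfcont.intervalIntegrable _ _)
        hfcont.stronglyMeasurable.stronglyMeasurableAtFilter
        hfcont.continuousAt
    have h2 := ((h1.const_mul ((p1 - p0) / Iint β 1)).const_add p0)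
    have : p = fun u => p0 + (p1 - p0) / Iint β 1 * Iint β u := funext hp
    rw [this]; exact h2
  have hβat0 : β 0 = β0 := by simp [hβ, lag0, lagHalf, lag1]
  have hβat1 : β 1 = β1 := by simp [hβ, lag0, lagHalf, lag1]; norm_num
  have hdI : (p1 - p0) / Iint β 1 ≠ 0 := div_ne_zero hd hI
  have key : ∀ b a : ℝ, b = a - (p1 - p0).arg →
      ∃ k : ℤ, ((p1 - p0) / Iint β 1 * Complex.exp (Complex.I * (b : ℂ))).arg
        = a - (Iint β 1).arg + 2 * π * k := by
    intro b a hba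
    have hexp : Complex.exp (Complex.I * (b : ℂ)) ≠ 0 := Complex.exp_ne_zero _
    have hangle : (((p1 - p0) / Iint β 1 * Complex.exp (Complex.I * (b : ℂ))).arg : Real.Angle)
        = ((a - (Iint β 1).arg : ℝ) : Real.Angle) := by
      rw [Complex.arg_mul_coe_angle hdI hexp, Complex.arg_div_coe_angle hd hI]
      have : Complex.exp (Complex.I * (b : ℂ)) = Complex.cos b + Complex.sin b * Complex.I := by
        rw [mul_comm, Complex.exp_mul_I]
      rw [this, ← Complex.ofReal_cos, ← Complex.ofReal_sin]
      have := Complex.arg_cos_add_sin_mul_I_coe_angle (b : Real.Angle)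
      rw [Real.Angle.cos_coe, Real.Angle.sin_coe] at this
      rw [this, hba]
      push_cast [Real.Angle.coe_sub, Real.Angle.coe_add]
      abel
    rw [Real.Angle.angle_eq_iff_two_pi_dvd_sub] at hangle
    obtain ⟨k, hk⟩ := hangle
    exact ⟨k, by linarith⟩
  refine ⟨by simp [hp, hI0], by rw [hp]; field_simp; ring, hderiv, ?_, ?_⟩
  · rw [hβat0]; exact key β0 α0 hβ0
  · rw [hβat1]; exact key β1 α1 hβ1
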